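/- Dynamic-programming policy evaluation for entropic-risk MDPs: Fix λ ≠ 0 and a stochastic Markov policy ψ. Define value functions backward by V^ψ_{T+1}(s) = 0, Q^ψ_t(s,a) = r(s,a) + (1/λ)·log Σ_{s'} P(s'|s,a)·exp(λ·V^ψ_{t+1}(s')), and V^ψ_t(s) = (1/λ)·log Σ_a ψ_t(a|s)·exp(λ·Q^ψ_t(s,a)). Then the entropic-risk performance satisfies J^λ(ψ) = (1/λ)·log Σ_s ζ₁(s)·exp(λ·V^ψ_1(s)). -/

import Mathlib

open Finset

/-- A finite-horizon MDP. -/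
structure FinMDP (S A : Type) [Fintype S] [Fintype A] where
  P : S → A → S → ℝ
  P_nonneg : ∀ s a s', 0 ≤ P s a s'
  P_sum : ∀ s a, ∑ s', P s a s' = 1
  r : S → A → ℝ
  init : S → ℝ
  init_nonneg : ∀ s, 0 ≤ init s
  init_sum : ∑ s, init s = 1
  T : ℕ
  T_pos : 1 ≤ T

variable {S A : Type} [Fintype S] [Fintype A] [Nonempty S] [Nonempty A]

/-- A stochastic Markov policy: a pmf on actions at each (0-indexed) time and state. -/
def IsMPolicy {S A : Type} [Fintype A] (ψ : ℕ → S → A → ℝ) : Prop :=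
  ∀ t s, (∀ a, 0 ≤ ψ t s a) ∧ ∑ a, ψ t s a = 1

/-- Probability of a trajectory ((s_t, a_t))_{t<T} under the policy ψ. -/
noncomputable def mdpTrajProb (M : FinMDP S A) (ψ : ℕ → S → A → ℝ)
    (ω : Fin M.T → S × A) : ℝ :=
  M.init (ω ⟨0, M.T_pos⟩).1 *
  (∏ t : Fin M.T, ψ t.val (ω t).1 (ω t).2) *
  (∏ t : Fin M.T,
    if h : t.val + 1 < M.T then M.P (ω t).1 (ω t).2 (ω ⟨t.val + 1, h⟩).1 else 1)

/-- Entropic-risk performance J^λ(ψ) = (1/λ)·log E^ψ[exp(λ·Σ_t r(S_t,A_t))]. -/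
noncomputable def mdpJent (M : FinMDP S A) (ψ : ℕ → S → A → ℝ) (lam : ℝ) : ℝ :=
  (1/lam) * Real.log (∑ ω : Fin M.T → S × A,
    mdpTrajProb M ψ ω * Real.exp (lam * ∑ t : Fin M.T, M.r (ω t).1 (ω t).2))

/-- Backward policy-evaluation value function: `Vpol m` is V^ψ at the (0-indexed)
time `T − m`, so `Vpol 0 = V^ψ_{T+1} ≡ 0` and `Vpol T = V^ψ_1`.  It unfolds to
V^ψ_t(s) = (1/λ)·log Σ_a ψ_t(a|s)·exp(λ·Q^ψ_t(s,a)) with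
Q^ψ_t(s,a) = r(s,a) + (1/λ)·log Σ_{s'} P(s'|s,a)·exp(λ·V^ψ_{t+1}(s')). -/
noncomputable def Vpol (M : FinMDP S A) (ψ : ℕ → S → A → ℝ) (lam : ℝ) :
    ℕ → S → ℝ
  | 0 => fun _ => 0
  | (m+1) => fun s =>
      (1/lam) * Real.log (∑ a, ψ (M.T - (m+1)) s a *
        Real.exp (lam * (M.r s a +
          (1/lam) * Real.log (∑ s', M.P s a s' * Real.exp (lam * Vpol M ψ lam m s')))))

private lemma pmf_mul_pos {ι : Type*} [Fintype ι] {p f : ι → ℝ}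
    (hp : ∀ i, 0 ≤ p i) (hs : ∑ i, p i = 1) (hf : ∀ i, 0 < f i) :
    0 < ∑ i, p i * f i := by
  obtain ⟨i, hi⟩ : ∃ i, 0 < p i := by
    by_contra h
    push_neg at h
    have h0 : ∑ i, p i = 0 := Finset.sum_eq_zero fun i _ => le_antisymm (h i) (hp i)
    rw [h0] at hs; norm_num at hs
  exact Finset.sum_pos' (fun j _ => mul_nonneg (hp j) (hf j).le)
    ⟨i, Finset.mem_univ i, mul_pos hi (hf i)⟩

noncomputable def Gaux (M : FinMDP S A) (ψ : ℕ → S → A → ℝ) (lam : ℝ) : ℕ → ℕ → S → ℝ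
  | 0, _, _ => 1
  | (n+1), t0, s => ∑ a, ψ t0 s a *
      (Real.exp (lam * M.r s a) * ∑ s', M.P s a s' * Gaux M ψ lam n (t0+1) s')

lemma Gaux_pos (M : FinMDP S A) (ψ : ℕ → S → A → ℝ) (hψ : IsMPolicy ψ) (lam : ℝ) :
    ∀ n t0 s, 0 < Gaux M ψ lam n t0 s := by
  intro n
  induction n with
  | zero => intro t0 s; simp [Gaux]
  | succ k ih =>
    intro t0 s
    refine pmf_mul_pos (hψ t0 s).1 (hψ t0 s).2 fun a => ?_
    exact mul_pos (Real.exp_pos _)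
      (pmf_mul_pos (M.P_nonneg s a) (M.P_sum s a) fun s' => ih (t0+1) s')

lemma Gaux_eq_exp (M : FinMDP S A) (ψ : ℕ → S → A → ℝ) (hψ : IsMPolicy ψ)
    (lam : ℝ) (hlam : lam ≠ 0) :
    ∀ m, m ≤ M.T → ∀ s, Gaux M ψ lam m (M.T - m) s = Real.exp (lam * Vpol M ψ lam m s) := by
  intro m
  induction m with
  | zero => intro _ s; simp [Gaux, Vpol]
  | succ k ih =>
    intro hk s
    have hk' : k ≤ M.T := Nat.le_of_succ_le hk
    have ht : M.T - (k+1) + 1 = M.T - k := by omega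
    have hQ : ∀ a, (0 : ℝ) < ∑ s', M.P s a s' * Real.exp (lam * Vpol M ψ lam k s') :=
      fun a => pmf_mul_pos (M.P_nonneg s a) (M.P_sum s a) fun s' => Real.exp_pos _
    have hX : (0:ℝ) < ∑ a, ψ (M.T - (k+1)) s a *
        Real.exp (lam * (M.r s a +
          (1/lam) * Real.log (∑ s', M.P s a s' * Real.exp (lam * Vpol M ψ lam k s')))) :=
      pmf_mul_pos (hψ _ s).1 (hψ _ s).2 fun a => Real.exp_pos _
    show (∑ a, ψ (M.T - (k+1)) s a *
        (Real.exp (lam * M.r s a) *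
          ∑ s', M.P s a s' * Gaux M ψ lam k (M.T - (k+1) + 1) s'))
      = Real.exp (lam * Vpol M ψ lam (k+1) s)
    rw [ht]
    have hV : Real.exp (lam * Vpol M ψ lam (k+1) s)
        = ∑ a, ψ (M.T - (k+1)) s a *
          Real.exp (lam * (M.r s a +
            (1/lam) * Real.log (∑ s', M.P s a s' * Real.exp (lam * Vpol M ψ lam k s')))) := by
      show Real.exp (lam * ((1/lam) * Real.log _)) = _
      rw [← mul_assoc, mul_one_div, div_self hlam, one_mul, Real.exp_log hX]
    rw [hV]
    refine Finset.sum_congr rfl fun a _ => ?_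
    have hterm : Real.exp (lam * (M.r s a +
        (1/lam) * Real.log (∑ s', M.P s a s' * Real.exp (lam * Vpol M ψ lam k s'))))
        = Real.exp (lam * M.r s a) *
          ∑ s', M.P s a s' * Real.exp (lam * Vpol M ψ lam k s') := by
      rw [mul_add, Real.exp_add, ← mul_assoc lam, mul_one_div, div_self hlam, one_mul,
        Real.exp_log (hQ a)]
    rw [hterm]
    congr 1
    congr 1
    exact Finset.sum_congr rfl fun s' _ => by rw [ih hk' s']

lemma chainSum (M : FinMDP S A) (ψ : ℕ → S → A → ℝ) (lam : ℝ) :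
    ∀ n (hn : 0 < n) (t0 : ℕ) (w : S → ℝ),
      (∑ ω : Fin n → S × A,
        w (ω ⟨0, hn⟩).1 *
        (∏ t : Fin n, ψ (t0 + t.val) (ω t).1 (ω t).2) *
        (∏ t : Fin n,
          if h : t.val + 1 < n then M.P (ω t).1 (ω t).2 (ω ⟨t.val + 1, h⟩).1 else 1) *
        Real.exp (lam * ∑ t : Fin n, M.r (ω t).1 (ω t).2))
      = ∑ s, w s * Gaux M ψ lam n t0 s := by
  intro n
  induction n with
  | zero => intro hn; exact absurd hn (lt_irrefl 0)
  | succ k ih =>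
    cases k with
    | zero =>
      intro hn t0 w
      rw [← Equiv.sum_comp (Equiv.funUnique (Fin 1) (S × A)).symm]
      simp only [Equiv.funUnique_symm_apply]
      rw [Fintype.sum_prod_type]
      have hG : ∀ s, Gaux M ψ lam 1 t0 s = ∑ a, ψ t0 s a * Real.exp (lam * M.r s a) := by
        intro s
        show (∑ a, ψ t0 s a * (Real.exp (lam * M.r s a) * ∑ s', M.P s a s' * Gaux M ψ lam 0 (t0+1) s')) = _
        refine Finset.sum_congr rfl fun a _ => ?_
        simp [Gaux, M.P_sum s a]
      refine Finset.sum_congr rfl fun s _ => ?_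
      rw [hG, Finset.mul_sum]
      refine Finset.sum_congr rfl fun a _ => ?_
      simp only [uniqueElim_const, Fin.prod_univ_one, Fin.sum_univ_one]
      simp only [Fin.prod_univ_succ, Fin.prod_univ_zero, Fin.sum_univ_succ,
        Fin.sum_univ_zero, Fin.val_zero, add_zero, mul_one]
      rw [dif_neg (by omega)]
      ring
    | succ j =>
      intro hn t0 w
      rw [← Equiv.sum_comp (Fin.consEquiv (fun _ : Fin (j+1+1) => S × A)),
        Fintype.sum_prod_type]
      have hR : (∑ s, w s * Gaux M ψ lam (j+1+1) t0 s)
          = ∑ x : S × A, w x.1 * (ψ t0 x.1 x.2 *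
              (Real.exp (lam * M.r x.1 x.2) *
                ∑ s', M.P x.1 x.2 s' * Gaux M ψ lam (j+1) (t0+1) s')) := by
        rw [Fintype.sum_prod_type]
        refine Finset.sum_congr rfl fun s _ => ?_
        show w s * (∑ a, ψ t0 s a * (Real.exp (lam * M.r s a) * ∑ s', M.P s a s' * Gaux M ψ lam (j+1) (t0+1) s')) = _
        rw [Finset.mul_sum]
      rw [hR]
      refine Finset.sum_congr rfl fun x _ => ?_
      rw [← ih (Nat.succ_pos j) (t0+1) (M.P x.1 x.2), Finset.mul_sum, Finset.mul_sum,
        Finset.mul_sum]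
      refine Finset.sum_congr rfl fun ω' _ => ?_
      simp only [Fin.consEquiv_apply]
      have h0 : (Fin.cons x ω' : Fin (j+1+1) → S × A) ⟨0, hn⟩ = x := rfl
      have hcs : ∀ (i : ℕ) (h : i + 1 < j+1+1),
          (Fin.cons x ω' : Fin (j+1+1) → S × A) ⟨i+1, h⟩
            = ω' ⟨i, Nat.lt_of_succ_lt_succ h⟩ := by
        intro i h
        have : (⟨i+1, h⟩ : Fin (j+1+1)) = Fin.succ ⟨i, Nat.lt_of_succ_lt_succ h⟩ := rfl
        rw [this, Fin.cons_succ]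
      have h1 : (∏ t : Fin (j+1+1),
            ψ (t0 + t.val) ((Fin.cons x ω' : Fin (j+1+1) → S × A) t).1
              ((Fin.cons x ω' : Fin (j+1+1) → S × A) t).2)
          = ψ t0 x.1 x.2 * ∏ t : Fin (j+1), ψ (t0 + 1 + t.val) (ω' t).1 (ω' t).2 := by
        rw [Fin.prod_univ_succ]
        simp only [Fin.cons_zero, Fin.cons_succ, Fin.val_zero, Fin.val_succ, add_zero]
        congr 1
        exact Finset.prod_congr rfl fun t _ => by rw [show t0 + (t.val + 1) = t0 + 1 + t.val by omega]
      have h2 : (∏ t : Fin (j+1+1),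
            if h : t.val + 1 < j+1+1 then
              M.P ((Fin.cons x ω' : Fin (j+1+1) → S × A) t).1
                ((Fin.cons x ω' : Fin (j+1+1) → S × A) t).2
                ((Fin.cons x ω' : Fin (j+1+1) → S × A) ⟨t.val + 1, h⟩).1
            else 1)
          = M.P x.1 x.2 (ω' ⟨0, Nat.succ_pos j⟩).1 *
            ∏ t : Fin (j+1),
              if h : t.val + 1 < j+1 then M.P (ω' t).1 (ω' t).2 (ω' ⟨t.val + 1, h⟩).1 else 1 := by
        rw [Fin.prod_univ_succ]
        congr 1
        · refine Finset.prod_congr rfl fun t _ => ?_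
          by_cases h : t.val + 1 < j + 1
          · rw [dif_pos (show (Fin.succ t).val + 1 < j+1+1 by simp [Fin.val_succ]; omega),
              dif_pos h]
            rw [Fin.cons_succ]
            rw [show ((Fin.cons x ω' : Fin (j+1+1) → S × A) ⟨(Fin.succ t).val + 1, _⟩)
                = ω' ⟨t.val + 1, h⟩ from hcs (t.val+1) _]
          · rw [dif_neg (by simp [Fin.val_succ]; omega), dif_neg h]
      have h3 : (∑ t : Fin (j+1+1),
            M.r ((Fin.cons x ω' : Fin (j+1+1) → S × A) t).1
              ((Fin.cons x ω' : Fin (j+1+1) → S × A) t).2)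
          = M.r x.1 x.2 + ∑ t : Fin (j+1), M.r (ω' t).1 (ω' t).2 := by
        rw [Fin.sum_univ_succ]
        simp [Fin.cons_zero, Fin.cons_succ]
      rw [h0, h1, h2, h3, mul_add, Real.exp_add]
      ring

/-- **Dynamic-programming policy evaluation for entropic-risk MDPs**:
J^λ(ψ) = (1/λ)·log Σ_s ζ₁(s)·exp(λ·V^ψ_1(s)). -/
theorem entropic_mdp_policy_evaluation
    (M : FinMDP S A) (ψ : ℕ → S → A → ℝ) (hψ : IsMPolicy ψ)
    (lam : ℝ) (hlam : lam ≠ 0) :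
    mdpJent M ψ lam
      = (1/lam) * Real.log (∑ s, M.init s * Real.exp (lam * Vpol M ψ lam M.T s)) := by
  have h := chainSum M ψ lam M.T M.T_pos 0 M.init
  simp only [zero_add] at h
  unfold mdpJent mdpTrajProb
  rw [h]
  congr 1
  congr 1
  refine Finset.sum_congr rfl fun s _ => ?_
  have hG := Gaux_eq_exp M ψ hψ lam hlam M.T le_rfl s
  rw [Nat.sub_self] at hG
  rw [hG]
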